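/- Let 0 < λ < 1 and let δ be an admissible FCFS pair configuration. Then the series ∑_{x1,y1,x2,y2 ≥ 1} G(x1,y1,x2,y2) converges absolutely and equals λ − 2·δ^{pos}(1), where δ^{pos}(1) := ∑_{x2≥1} δ(1,x2). Consequently, if G(x1,y1,x2,y2) = 0 for all indices, then q(0) = 1 − λ. -/

import Mathlib

open scoped BigOperators

/-- `δ(x1,y1,x2) = ∑_{y2} δ(x1,y1,x2,y2)`. -/
noncomputable def mar3 (del : ℕ → ℕ → ℕ → ℕ → ℝ) (x1 y1 x2 : ℕ) : ℝ :=
  ∑' y2 : ℕ, del x1 y1 x2 y2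

/-- `δ(x1,x2) = ∑_{y1,y2} δ(x1,y1,x2,y2)`. -/
noncomputable def mar2 (del : ℕ → ℕ → ℕ → ℕ → ℝ) (x1 x2 : ℕ) : ℝ :=
  ∑' yy : ℕ × ℕ, del x1 yy.1 x2 yy.2

/-- `q(x) = 2δ(1,x)` for `x ≥ 1`, and `q(0) = 1 − ∑_{x≥1} q(x)`. -/
noncomputable def qPos (del : ℕ → ℕ → ℕ → ℕ → ℝ) (x : ℕ) : ℝ :=
  if x = 0 then 1 - ∑' z : ℕ, 2 * mar2 del 1 (z + 1) else 2 * mar2 del 1 x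

/-- `κ(x_a,x_b) = ∑_{x'=1}^{x_a} δ(x',1,x_b)/δ(x',x_b)`. -/
noncomputable def kap (del : ℕ → ℕ → ℕ → ℕ → ℝ) (xa xb : ℕ) : ℝ :=
  ∑ x' ∈ Finset.Icc 1 xa, mar3 del x' 1 xb / mar2 del x' xb

/-- An admissible position/queue-length pair configuration: nonnegative,
vanishing outside `1 ≤ x1 ≤ x2`, `1 ≤ y1 ≤ y2`, symmetric in the two replicas,
with finite first moment of the queue length and positive marginals. -/
def AdmissibleQuad (del : ℕ → ℕ → ℕ → ℕ → ℝ) : Prop :=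
  (∀ x1 y1 x2 y2, 0 ≤ del x1 y1 x2 y2) ∧
  (∀ x1 y1 x2 y2, x1 = 0 ∨ y1 = 0 ∨ x2 = 0 ∨ y2 = 0 ∨ x2 < x1 ∨ y2 < y1 →
      del x1 y1 x2 y2 = 0) ∧
  (∀ x1 y1 x2 y2, del x1 y1 x2 y2 = del y1 x1 y2 x2) ∧
  Summable (fun v : ℕ × ℕ × ℕ × ℕ =>
      (v.2.2.1 : ℝ) * del v.1 v.2.1 v.2.2.1 v.2.2.2) ∧
  (∀ x1 x2 : ℕ, 1 ≤ x1 → x1 ≤ x2 → 0 < mar2 del x1 x2)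

/-- The FCFS pair drift `G(x1,y1,x2,y2)`. -/
noncomputable def GFCFS (lam : ℝ) (del : ℕ → ℕ → ℕ → ℕ → ℝ)
    (x1 y1 x2 y2 : ℕ) : ℝ :=
  lam * qPos del (x2 - 1) * qPos del (y2 - 1) *
      (if x1 = x2 ∧ y1 = y2 then 1 else 0)
    - 4 * lam * del x1 y1 x2 y2
    + 2 * lam * del x1 y1 (x2 - 1) y2 + 2 * lam * del x1 y1 x2 (y2 - 1)
    - del x1 y1 x2 y2 *
        (2 + kap del x2 x2 - mar3 del x1 1 x2 / mar2 del x1 x2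
          + kap del y2 y2 - mar3 del y1 1 y2 / mar2 del y1 y2)
    + del (x1 + 1) y1 (x2 + 1) y2 * (1 + kap del x1 (x2 + 1))
    + del x1 y1 (x2 + 1) y2 * (kap del (x2 + 1) (x2 + 1) - kap del x1 (x2 + 1))
    + del x1 (y1 + 1) x2 (y2 + 1) * (1 + kap del y1 (y2 + 1))
    + del x1 y1 x2 (y2 + 1) * (kap del (y2 + 1) (y2 + 1) - kap del y1 (y2 + 1))

open Function

section helpers
variable {del : ℕ → ℕ → ℕ → ℕ → ℝ}

/-- δ is summable over all quadruples. -/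
lemma sum_d4 (hnn : ∀ x1 y1 x2 y2, 0 ≤ del x1 y1 x2 y2)
    (hvan : ∀ x1 y1 x2 y2, x1 = 0 ∨ y1 = 0 ∨ x2 = 0 ∨ y2 = 0 ∨ x2 < x1 ∨ y2 < y1 →
      del x1 y1 x2 y2 = 0)
    (hmom : Summable (fun v : ℕ × ℕ × ℕ × ℕ =>
      (v.2.2.1 : ℝ) * del v.1 v.2.1 v.2.2.1 v.2.2.2)) :
    Summable (fun v : ℕ × ℕ × ℕ × ℕ => del v.1 v.2.1 v.2.2.1 v.2.2.2) := by
  refine Summable.of_nonneg_of_le (fun v => hnn _ _ _ _) (fun v => ?_) hmom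
  rcases Nat.eq_zero_or_pos v.2.2.1 with h | h
  · rw [hvan v.1 v.2.1 v.2.2.1 v.2.2.2 (by tauto)]; simp [h]
  · exact le_mul_of_one_le_left (hnn _ _ _ _) (by exact_mod_cast h)

/-- the symmetric moment. -/
lemma hmom' (hsym : ∀ x1 y1 x2 y2, del x1 y1 x2 y2 = del y1 x1 y2 x2)
    (hmom : Summable (fun v : ℕ × ℕ × ℕ × ℕ =>
      (v.2.2.1 : ℝ) * del v.1 v.2.1 v.2.2.1 v.2.2.2)) :
    Summable (fun v : ℕ × ℕ × ℕ × ℕ =>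
    (v.2.2.2 : ℝ) * del v.1 v.2.1 v.2.2.1 v.2.2.2) := by
  have h := hmom.comp_injective (i := fun v : ℕ × ℕ × ℕ × ℕ => (v.2.1, v.1, v.2.2.2, v.2.2.1))
    (by intro a b hab; simp only [Prod.ext_iff] at hab ⊢; tauto)
  refine h.congr (fun v => ?_)
  simp only [comp_apply]
  rw [hsym v.2.1 v.1 v.2.2.2 v.2.2.1]

lemma sum_slice (hd4 : Summable (fun v : ℕ × ℕ × ℕ × ℕ => del v.1 v.2.1 v.2.2.1 v.2.2.2))
    (x1 x2 : ℕ) : Summable (fun yy : ℕ × ℕ => del x1 yy.1 x2 yy.2) := by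
  exact hd4.comp_injective (i := fun yy : ℕ × ℕ => (x1, yy.1, x2, yy.2))
    (by intro a b hab; simp only [Prod.ext_iff] at hab ⊢; tauto)

lemma sum_slice1 (hd4 : Summable (fun v : ℕ × ℕ × ℕ × ℕ => del v.1 v.2.1 v.2.2.1 v.2.2.2))
    (x1 y1 x2 : ℕ) : Summable (fun y2 : ℕ => del x1 y1 x2 y2) := by
  exact hd4.comp_injective (i := fun y2 : ℕ => (x1, y1, x2, y2))
    (by intro a b hab; simp only [Prod.ext_iff] at hab ⊢; tauto)

lemma mar3_nonneg (hnn : ∀ x1 y1 x2 y2, 0 ≤ del x1 y1 x2 y2) (x1 y1 x2 : ℕ) :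
    0 ≤ mar3 del x1 y1 x2 :=
  tsum_nonneg (fun _ => hnn _ _ _ _)

lemma mar2_nonneg (hnn : ∀ x1 y1 x2 y2, 0 ≤ del x1 y1 x2 y2) (x1 x2 : ℕ) :
    0 ≤ mar2 del x1 x2 :=
  tsum_nonneg (fun _ => hnn _ _ _ _)

lemma mar3_le_mar2 (hnn : ∀ x1 y1 x2 y2, 0 ≤ del x1 y1 x2 y2)
    (hd4 : Summable (fun v : ℕ × ℕ × ℕ × ℕ => del v.1 v.2.1 v.2.2.1 v.2.2.2))
    (x1 y1 x2 : ℕ) : mar3 del x1 y1 x2 ≤ mar2 del x1 x2 := by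
  have hs := sum_slice hd4 x1 x2
  have h1 : mar2 del x1 x2 = ∑' y1' : ℕ, ∑' y2 : ℕ, del x1 y1' x2 y2 :=
    Summable.tsum_prod' hs (fun b => sum_slice1 hd4 x1 b x2)
  rw [show mar2 del x1 x2 = ∑' y1' : ℕ, ∑' y2 : ℕ, del x1 y1' x2 y2 from h1]
  have hsum2 : Summable (fun y1' : ℕ => ∑' y2 : ℕ, del x1 y1' x2 y2) := by
    have := (summable_prod_of_nonneg (f := fun yy : ℕ × ℕ => del x1 yy.1 x2 yy.2)
      (fun yy => hnn _ _ _ _)).mp hs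
    exact this.2
  exact Summable.le_tsum hsum2 y1 (fun j _ => tsum_nonneg (fun _ => hnn _ _ _ _))

lemma ratio_nonneg (hnn : ∀ x1 y1 x2 y2, 0 ≤ del x1 y1 x2 y2) (x1 x2 : ℕ) :
    0 ≤ mar3 del x1 1 x2 / mar2 del x1 x2 :=
  div_nonneg (mar3_nonneg hnn _ _ _) (mar2_nonneg hnn _ _)

lemma ratio_le_one (hnn : ∀ x1 y1 x2 y2, 0 ≤ del x1 y1 x2 y2)
    (hd4 : Summable (fun v : ℕ × ℕ × ℕ × ℕ => del v.1 v.2.1 v.2.2.1 v.2.2.2))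
    (x1 x2 : ℕ) : mar3 del x1 1 x2 / mar2 del x1 x2 ≤ 1 := by
  rcases eq_or_lt_of_le (mar2_nonneg hnn x1 x2) with h | h
  · rw [← h, div_zero]; norm_num
  · exact (div_le_one h).mpr (mar3_le_mar2 hnn hd4 _ _ _)

lemma kap_nonneg (hnn : ∀ x1 y1 x2 y2, 0 ≤ del x1 y1 x2 y2) (xa xb : ℕ) :
    0 ≤ kap del xa xb :=
  Finset.sum_nonneg (fun _ _ => ratio_nonneg hnn _ _)

lemma kap_le (hnn : ∀ x1 y1 x2 y2, 0 ≤ del x1 y1 x2 y2)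
    (hd4 : Summable (fun v : ℕ × ℕ × ℕ × ℕ => del v.1 v.2.1 v.2.2.1 v.2.2.2))
    (xa xb : ℕ) : kap del xa xb ≤ xa := by
  calc kap del xa xb ≤ ∑ x' ∈ Finset.Icc 1 xa, 1 :=
        Finset.sum_le_sum (fun i _ => ratio_le_one hnn hd4 _ _)
    _ ≤ xa := by simp

lemma kap_mono (hnn : ∀ x1 y1 x2 y2, 0 ≤ del x1 y1 x2 y2) (xa xa' xb : ℕ) (h : xa ≤ xa') :
    kap del xa xb ≤ kap del xa' xb :=
  Finset.sum_le_sum_of_subset_of_nonneg (Finset.Icc_subset_Icc_right h)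
    (fun i _ _ => ratio_nonneg hnn _ _)

lemma kap_succ (a xb : ℕ) :
    kap del (a + 1) xb = kap del a xb + mar3 del (a+1) 1 xb / mar2 del (a+1) xb := by
  unfold kap
  rw [Finset.sum_Icc_succ_top (by omega)]

lemma kap_one (xb : ℕ) : kap del 1 xb = mar3 del 1 1 xb / mar2 del 1 xb := by
  unfold kap; simp

lemma kap_zero (xb : ℕ) : kap del 0 xb = 0 := by unfold kap; simp

end helpers

section more
variable {del : ℕ → ℕ → ℕ → ℕ → ℝ}

lemma sum_mar2_shift
    (hnn : ∀ x1 y1 x2 y2, 0 ≤ del x1 y1 x2 y2)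
    (hd4 : Summable (fun v : ℕ × ℕ × ℕ × ℕ => del v.1 v.2.1 v.2.2.1 v.2.2.2)) :
    Summable (fun c : ℕ => mar2 del 1 (c + 1)) := by
  have hF : Summable (fun p : ℕ × ℕ × ℕ => del 1 p.2.1 (p.1 + 1) p.2.2) :=
    hd4.comp_injective (i := fun p : ℕ × ℕ × ℕ => (1, p.2.1, p.1 + 1, p.2.2))
      (by intro a b hab; simp only [Prod.ext_iff] at hab ⊢; omega)
  have := ((summable_prod_of_nonneg (f := fun p : ℕ × ℕ × ℕ => del 1 p.2.1 (p.1 + 1) p.2.2)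
      (fun p => hnn _ _ _ _)).mp hF).2
  exact this.congr (fun c => rfl)

lemma sum_q (hnn : ∀ x1 y1 x2 y2, 0 ≤ del x1 y1 x2 y2)
    (hd4 : Summable (fun v : ℕ × ℕ × ℕ × ℕ => del v.1 v.2.1 v.2.2.1 v.2.2.2)) :
    Summable (qPos del) := by
  refine (summable_nat_add_iff 1).mp ?_
  refine (((sum_mar2_shift hnn hd4).mul_left 2)).congr (fun n => ?_)
  simp [qPos]

lemma tsum_q (hnn : ∀ x1 y1 x2 y2, 0 ≤ del x1 y1 x2 y2)
    (hd4 : Summable (fun v : ℕ × ℕ × ℕ × ℕ => del v.1 v.2.1 v.2.2.1 v.2.2.2)) :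
    ∑' x : ℕ, qPos del x = 1 := by
  rw [Summable.tsum_eq_zero_add (sum_q hnn hd4)]
  have h1 : ∀ b : ℕ, qPos del (b + 1) = 2 * mar2 del 1 (b + 1) := by
    intro b; simp [qPos]
  rw [tsum_congr h1]
  have h0 : qPos del 0 = 1 - ∑' z : ℕ, 2 * mar2 del 1 (z + 1) := by simp [qPos]
  rw [h0]; ring

end more

noncomputable def f4 (del : ℕ → ℕ → ℕ → ℕ → ℝ) (v : ℕ × ℕ × ℕ × ℕ) : ℝ :=
  del (v.1 + 1) (v.2.1 + 1) (v.2.2.1 + 1) (v.2.2.2 + 1)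

section more2
variable {del : ℕ → ℕ → ℕ → ℕ → ℝ}

lemma sum_f4 (hd4 : Summable (fun v : ℕ × ℕ × ℕ × ℕ => del v.1 v.2.1 v.2.2.1 v.2.2.2)) :
    Summable (f4 del) :=
  hd4.comp_injective (i := fun v : ℕ × ℕ × ℕ × ℕ => (v.1 + 1, v.2.1 + 1, v.2.2.1 + 1, v.2.2.2 + 1))
    (by intro a b hab; simp only [Prod.ext_iff] at hab ⊢; omega)

/-- weighted summability: `(c + k) * del (a+s1) (b+s2) (c+s3) (d+s4)` is summable. -/
lemma sum_cdel
    (hnn : ∀ x1 y1 x2 y2, 0 ≤ del x1 y1 x2 y2)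
    (hvan : ∀ x1 y1 x2 y2, x1 = 0 ∨ y1 = 0 ∨ x2 = 0 ∨ y2 = 0 ∨ x2 < x1 ∨ y2 < y1 →
      del x1 y1 x2 y2 = 0)
    (hmom : Summable (fun v : ℕ × ℕ × ℕ × ℕ =>
      (v.2.2.1 : ℝ) * del v.1 v.2.1 v.2.2.1 v.2.2.2))
    (k : ℝ) (s1 s2 s3 s4 : ℕ) :
    Summable (fun v : ℕ × ℕ × ℕ × ℕ =>
      ((v.2.2.1 : ℝ) + k) * del (v.1 + s1) (v.2.1 + s2) (v.2.2.1 + s3) (v.2.2.2 + s4)) := by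
  have hinj : Function.Injective
      (fun v : ℕ × ℕ × ℕ × ℕ => (v.1 + s1, v.2.1 + s2, v.2.2.1 + s3, v.2.2.2 + s4)) := by
    intro a b hab; simp only [Prod.ext_iff] at hab ⊢; omega
  have h1 := hmom.comp_injective hinj
  have h2 := (sum_d4 hnn hvan hmom).comp_injective hinj
  refine (h1.add (h2.mul_left (k - s3))).congr (fun v => ?_)
  simp only [Function.comp_apply]
  push_cast
  ring

lemma summable_bound {f g : ℕ × ℕ × ℕ × ℕ → ℝ} (h1 : Summable g)
    (hb : ∀ v, |f v| ≤ g v) : Summable f :=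
  Summable.of_abs (Summable.of_nonneg_of_le (fun v => abs_nonneg _) hb h1)

end more2

noncomputable def pA (lam : ℝ) (del : ℕ → ℕ → ℕ → ℕ → ℝ) (v : ℕ × ℕ × ℕ × ℕ) : ℝ :=
  lam * qPos del v.2.2.1 * qPos del v.2.2.2 *
    (if v.1 = v.2.2.1 ∧ v.2.1 = v.2.2.2 then 1 else 0)

noncomputable def pB (lam : ℝ) (del : ℕ → ℕ → ℕ → ℕ → ℝ) (v : ℕ × ℕ × ℕ × ℕ) : ℝ :=
  -(4 * lam * del (v.1 + 1) (v.2.1 + 1) (v.2.2.1 + 1) (v.2.2.2 + 1))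
    + 2 * lam * del (v.1 + 1) (v.2.1 + 1) v.2.2.1 (v.2.2.2 + 1)
    + 2 * lam * del (v.1 + 1) (v.2.1 + 1) (v.2.2.1 + 1) v.2.2.2

noncomputable def pX (del : ℕ → ℕ → ℕ → ℕ → ℝ) (v : ℕ × ℕ × ℕ × ℕ) : ℝ :=
  -(del (v.1 + 1) (v.2.1 + 1) (v.2.2.1 + 1) (v.2.2.2 + 1) *
      (1 + kap del (v.2.2.1 + 1) (v.2.2.1 + 1) -
        mar3 del (v.1 + 1) 1 (v.2.2.1 + 1) / mar2 del (v.1 + 1) (v.2.2.1 + 1)))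
    + del (v.1 + 2) (v.2.1 + 1) (v.2.2.1 + 2) (v.2.2.2 + 1) *
        (1 + kap del (v.1 + 1) (v.2.2.1 + 2))
    + del (v.1 + 1) (v.2.1 + 1) (v.2.2.1 + 2) (v.2.2.2 + 1) *
        (kap del (v.2.2.1 + 2) (v.2.2.1 + 2) - kap del (v.1 + 1) (v.2.2.1 + 2))

noncomputable def pY (del : ℕ → ℕ → ℕ → ℕ → ℝ) (v : ℕ × ℕ × ℕ × ℕ) : ℝ :=
  -(del (v.1 + 1) (v.2.1 + 1) (v.2.2.1 + 1) (v.2.2.2 + 1) *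
      (1 + kap del (v.2.2.2 + 1) (v.2.2.2 + 1) -
        mar3 del (v.2.1 + 1) 1 (v.2.2.2 + 1) / mar2 del (v.2.1 + 1) (v.2.2.2 + 1)))
    + del (v.1 + 1) (v.2.1 + 2) (v.2.2.1 + 1) (v.2.2.2 + 2) *
        (1 + kap del (v.2.1 + 1) (v.2.2.2 + 2))
    + del (v.1 + 1) (v.2.1 + 1) (v.2.2.1 + 1) (v.2.2.2 + 2) *
        (kap del (v.2.2.2 + 2) (v.2.2.2 + 2) - kap del (v.2.1 + 1) (v.2.2.2 + 2))

lemma G_decomp (lam : ℝ) (del : ℕ → ℕ → ℕ → ℕ → ℝ) (v : ℕ × ℕ × ℕ × ℕ) :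
    GFCFS lam del (v.1 + 1) (v.2.1 + 1) (v.2.2.1 + 1) (v.2.2.2 + 1) =
      pA lam del v + pB lam del v + pX del v + pY del v := by
  obtain ⟨a, b, c, d⟩ := v
  simp only [GFCFS, pA, pB, pX, pY, Nat.add_sub_cancel, Nat.add_right_cancel_iff]
  ring

noncomputable def pX1 (del : ℕ → ℕ → ℕ → ℕ → ℝ) (v : ℕ × ℕ × ℕ × ℕ) : ℝ :=
  -(del (v.1 + 1) (v.2.1 + 1) (v.2.2.1 + 1) (v.2.2.2 + 1) *
      (1 + kap del (v.2.2.1 + 1) (v.2.2.1 + 1) -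
        mar3 del (v.1 + 1) 1 (v.2.2.1 + 1) / mar2 del (v.1 + 1) (v.2.2.1 + 1)))

noncomputable def pX2 (del : ℕ → ℕ → ℕ → ℕ → ℝ) (v : ℕ × ℕ × ℕ × ℕ) : ℝ :=
  del (v.1 + 2) (v.2.1 + 1) (v.2.2.1 + 2) (v.2.2.2 + 1) *
        (1 + kap del (v.1 + 1) (v.2.2.1 + 2))

noncomputable def pX3 (del : ℕ → ℕ → ℕ → ℕ → ℝ) (v : ℕ × ℕ × ℕ × ℕ) : ℝ :=
  del (v.1 + 1) (v.2.1 + 1) (v.2.2.1 + 2) (v.2.2.2 + 1) *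
        (kap del (v.2.2.1 + 2) (v.2.2.1 + 2) - kap del (v.1 + 1) (v.2.2.1 + 2))

noncomputable def qX2 (del : ℕ → ℕ → ℕ → ℕ → ℝ) (v : ℕ × ℕ × ℕ × ℕ) : ℝ :=
  if 1 ≤ v.1 ∧ 1 ≤ v.2.2.1 then f4 del v * (1 + kap del v.1 (v.2.2.1 + 1)) else 0

noncomputable def qX3 (del : ℕ → ℕ → ℕ → ℕ → ℝ) (v : ℕ × ℕ × ℕ × ℕ) : ℝ :=
  if 1 ≤ v.2.2.1 then
    f4 del v * (kap del (v.2.2.1 + 1) (v.2.2.1 + 1) - kap del (v.1 + 1) (v.2.2.1 + 1))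
  else 0

lemma pX_split (del : ℕ → ℕ → ℕ → ℕ → ℝ) (v : ℕ × ℕ × ℕ × ℕ) :
    pX del v = pX1 del v + pX2 del v + pX3 del v := rfl

section sums
variable {del : ℕ → ℕ → ℕ → ℕ → ℝ}
variable (hnn : ∀ x1 y1 x2 y2, 0 ≤ del x1 y1 x2 y2)
variable (hvan : ∀ x1 y1 x2 y2, x1 = 0 ∨ y1 = 0 ∨ x2 = 0 ∨ y2 = 0 ∨ x2 < x1 ∨ y2 < y1 →
      del x1 y1 x2 y2 = 0)
variable (hmom : Summable (fun v : ℕ × ℕ × ℕ × ℕ =>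
      (v.2.2.1 : ℝ) * del v.1 v.2.1 v.2.2.1 v.2.2.2))

include hnn hvan hmom

lemma sum_pX1 : Summable (pX1 del) := by
  have hd4 := sum_d4 hnn hvan hmom
  refine summable_bound (sum_cdel hnn hvan hmom 3 1 1 1 1) (fun v => ?_)
  obtain ⟨a, b, c, d⟩ := v
  simp only [pX1, abs_neg, abs_mul]
  rw [abs_of_nonneg (hnn _ _ _ _)]
  have h1 := kap_nonneg hnn (c+1) (c+1)
  have h2 := kap_le hnn hd4 (c+1) (c+1)
  have h3 := ratio_nonneg hnn (a+1) (c+1)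
  have h4 := ratio_le_one hnn hd4 (a+1) (c+1)
  have h5 := hnn (a+1) (b+1) (c+1) (d+1)
  have habs : |1 + kap del (c+1) (c+1) -
      mar3 del (a+1) 1 (c+1) / mar2 del (a+1) (c+1)| ≤ (c : ℝ) + 3 := by
    rw [abs_le]; push_cast at h2 ⊢; constructor <;> nlinarith
  calc del (a+1) (b+1) (c+1) (d+1) * |1 + kap del (c+1) (c+1) -
      mar3 del (a+1) 1 (c+1) / mar2 del (a+1) (c+1)|
      ≤ del (a+1) (b+1) (c+1) (d+1) * ((c : ℝ) + 3) := by
        exact mul_le_mul_of_nonneg_left habs h5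
    _ = ((c : ℝ) + 3) * del (a+1) (b+1) (c+1) (d+1) := by ring

lemma sum_pX2 : Summable (pX2 del) := by
  have hd4 := sum_d4 hnn hvan hmom
  refine summable_bound (sum_cdel hnn hvan hmom 3 2 1 2 1) (fun v => ?_)
  obtain ⟨a, b, c, d⟩ := v
  simp only [pX2]
  rcases le_or_gt a c with h | h
  · rw [abs_mul, abs_of_nonneg (hnn _ _ _ _)]
    have h1 := kap_nonneg hnn (a+1) (c+2)
    have h2 := kap_le hnn hd4 (a+1) (c+2)
    have h5 := hnn (a+2) (b+1) (c+2) (d+1)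
    have habs : |1 + kap del (a+1) (c+2)| ≤ (c : ℝ) + 3 := by
      rw [abs_le]; push_cast at h2 ⊢
      have hac : (a : ℝ) ≤ c := Nat.cast_le.mpr h
      constructor <;> nlinarith
    calc del (a+2) (b+1) (c+2) (d+1) * |1 + kap del (a+1) (c+2)|
        ≤ del (a+2) (b+1) (c+2) (d+1) * ((c : ℝ) + 3) :=
          mul_le_mul_of_nonneg_left habs h5
      _ = ((c : ℝ) + 3) * del (a+2) (b+1) (c+2) (d+1) := by ring
  · rw [hvan (a+2) (b+1) (c+2) (d+1) (by omega)]
    simp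

lemma sum_pX3 : Summable (pX3 del) := by
  have hd4 := sum_d4 hnn hvan hmom
  refine summable_bound (sum_cdel hnn hvan hmom 3 1 1 2 1) (fun v => ?_)
  obtain ⟨a, b, c, d⟩ := v
  simp only [pX3]
  rcases le_or_gt a (c+1) with h | h
  · rw [abs_mul, abs_of_nonneg (hnn _ _ _ _)]
    have h1 := kap_nonneg hnn (a+1) (c+2)
    have h2 := kap_le hnn hd4 (c+2) (c+2)
    have h3 := kap_mono hnn (a+1) (c+2) (c+2) (by omega)
    have h4 := kap_nonneg hnn (c+2) (c+2)
    have h5 := hnn (a+1) (b+1) (c+2) (d+1)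
    have habs : |kap del (c+2) (c+2) - kap del (a+1) (c+2)| ≤ (c : ℝ) + 3 := by
      rw [abs_le]; push_cast at h2 ⊢; constructor <;> nlinarith
    calc del (a+1) (b+1) (c+2) (d+1) * |kap del (c+2) (c+2) - kap del (a+1) (c+2)|
        ≤ del (a+1) (b+1) (c+2) (d+1) * ((c : ℝ) + 3) :=
          mul_le_mul_of_nonneg_left habs h5
      _ = ((c : ℝ) + 3) * del (a+1) (b+1) (c+2) (d+1) := by ring
  · rw [hvan (a+1) (b+1) (c+2) (d+1) (by omega)]
    simp

lemma sum_qX2 : Summable (qX2 del) := by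
  have hd4 := sum_d4 hnn hvan hmom
  refine summable_bound (sum_cdel hnn hvan hmom 3 1 1 1 1) (fun v => ?_)
  obtain ⟨a, b, c, d⟩ := v
  simp only [qX2]
  split_ifs with hc
  · rcases le_or_gt a c with h | h
    · rw [abs_mul]
      simp only [f4]
      rw [abs_of_nonneg (hnn _ _ _ _)]
      have h1 := kap_nonneg hnn a (c+1)
      have h2 := kap_le hnn hd4 a (c+1)
      have h5 := hnn (a+1) (b+1) (c+1) (d+1)
      have habs : |1 + kap del a (c+1)| ≤ (c : ℝ) + 3 := by
        rw [abs_le]; push_cast at h2 ⊢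
        have hac : (a : ℝ) ≤ c := Nat.cast_le.mpr h
        constructor <;> nlinarith
      calc del (a+1) (b+1) (c+1) (d+1) * |1 + kap del a (c+1)|
          ≤ del (a+1) (b+1) (c+1) (d+1) * ((c : ℝ) + 3) :=
            mul_le_mul_of_nonneg_left habs h5
        _ = ((c : ℝ) + 3) * del (a+1) (b+1) (c+1) (d+1) := by ring
    · simp only [f4]
      rw [hvan (a+1) (b+1) (c+1) (d+1) (by omega)]
      simp
  · simp only [abs_zero]
    exact mul_nonneg (by positivity) (hnn _ _ _ _)

lemma sum_qX3 : Summable (qX3 del) := by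
  have hd4 := sum_d4 hnn hvan hmom
  refine summable_bound (sum_cdel hnn hvan hmom 3 1 1 1 1) (fun v => ?_)
  obtain ⟨a, b, c, d⟩ := v
  simp only [qX3]
  split_ifs with hc
  · rcases le_or_gt a c with h | h
    · rw [abs_mul]
      simp only [f4]
      rw [abs_of_nonneg (hnn _ _ _ _)]
      have h1 := kap_nonneg hnn (a+1) (c+1)
      have h2 := kap_le hnn hd4 (c+1) (c+1)
      have h3 := kap_mono hnn (a+1) (c+1) (c+1) (by omega)
      have h4 := kap_nonneg hnn (c+1) (c+1)
      have h5 := hnn (a+1) (b+1) (c+1) (d+1)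
      have habs : |kap del (c+1) (c+1) - kap del (a+1) (c+1)| ≤ (c : ℝ) + 3 := by
        rw [abs_le]; push_cast at h2 ⊢; constructor <;> nlinarith
      calc del (a+1) (b+1) (c+1) (d+1) * |kap del (c+1) (c+1) - kap del (a+1) (c+1)|
          ≤ del (a+1) (b+1) (c+1) (d+1) * ((c : ℝ) + 3) :=
            mul_le_mul_of_nonneg_left habs h5
        _ = ((c : ℝ) + 3) * del (a+1) (b+1) (c+1) (d+1) := by ring
    · simp only [f4]
      rw [hvan (a+1) (b+1) (c+1) (d+1) (by omega)]
      simp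
  · simp only [abs_zero]
    exact mul_nonneg (by positivity) (hnn _ _ _ _)

end sums

section tsums
variable {del : ℕ → ℕ → ℕ → ℕ → ℝ}
variable (hnn : ∀ x1 y1 x2 y2, 0 ≤ del x1 y1 x2 y2)
variable (hvan : ∀ x1 y1 x2 y2, x1 = 0 ∨ y1 = 0 ∨ x2 = 0 ∨ y2 = 0 ∨ x2 < x1 ∨ y2 < y1 →
      del x1 y1 x2 y2 = 0)
variable (hmom : Summable (fun v : ℕ × ℕ × ℕ × ℕ =>
      (v.2.2.1 : ℝ) * del v.1 v.2.1 v.2.2.1 v.2.2.2))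

lemma tsum_pX2_eq : ∑' v : ℕ × ℕ × ℕ × ℕ, pX2 del v = ∑' v : ℕ × ℕ × ℕ × ℕ, qX2 del v := by
  have hinj : Function.Injective
      (fun v : ℕ × ℕ × ℕ × ℕ => (v.1 + 1, v.2.1, v.2.2.1 + 1, v.2.2.2)) := by
    intro x y hxy; simp only [Prod.ext_iff] at hxy ⊢; omega
  have hsupp : Function.support (qX2 del) ⊆
      Set.range (fun v : ℕ × ℕ × ℕ × ℕ => (v.1 + 1, v.2.1, v.2.2.1 + 1, v.2.2.2)) := by
    intro w hw
    obtain ⟨w1, w2, w3, w4⟩ := w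
    simp only [Function.mem_support, qX2] at hw
    have hcond : 1 ≤ w1 ∧ 1 ≤ w3 := by
      by_contra hk; rw [if_neg hk] at hw; exact hw rfl
    exact ⟨(w1 - 1, w2, w3 - 1, w4), by
      simp only [Prod.mk.injEq, and_true, true_and]; omega⟩
  calc ∑' v : ℕ × ℕ × ℕ × ℕ, pX2 del v
      = ∑' v : ℕ × ℕ × ℕ × ℕ,
          qX2 del (v.1 + 1, v.2.1, v.2.2.1 + 1, v.2.2.2) := by
        refine tsum_congr (fun v => ?_)
        obtain ⟨a, b, c, d⟩ := v
        simp only [pX2, qX2, f4]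
        rw [if_pos ⟨by omega, by omega⟩]
    _ = ∑' w : ℕ × ℕ × ℕ × ℕ, qX2 del w := hinj.tsum_eq hsupp

lemma tsum_pX3_eq : ∑' v : ℕ × ℕ × ℕ × ℕ, pX3 del v = ∑' v : ℕ × ℕ × ℕ × ℕ, qX3 del v := by
  have hinj : Function.Injective
      (fun v : ℕ × ℕ × ℕ × ℕ => (v.1, v.2.1, v.2.2.1 + 1, v.2.2.2)) := by
    intro x y hxy; simp only [Prod.ext_iff] at hxy ⊢; omega
  have hsupp : Function.support (qX3 del) ⊆
      Set.range (fun v : ℕ × ℕ × ℕ × ℕ => (v.1, v.2.1, v.2.2.1 + 1, v.2.2.2)) := by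
    intro w hw
    obtain ⟨w1, w2, w3, w4⟩ := w
    simp only [Function.mem_support, qX3] at hw
    have hcond : 1 ≤ w3 := by
      by_contra hk; rw [if_neg hk] at hw; exact hw rfl
    exact ⟨(w1, w2, w3 - 1, w4), by
      simp only [Prod.mk.injEq, and_true, true_and]; omega⟩
  calc ∑' v : ℕ × ℕ × ℕ × ℕ, pX3 del v
      = ∑' v : ℕ × ℕ × ℕ × ℕ,
          qX3 del (v.1, v.2.1, v.2.2.1 + 1, v.2.2.2) := by
        refine tsum_congr (fun v => ?_)
        obtain ⟨a, b, c, d⟩ := v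
        simp only [pX3, qX3, f4]
        rw [if_pos (by omega)]
    _ = ∑' w : ℕ × ℕ × ℕ × ℕ, qX3 del w := hinj.tsum_eq hsupp

include hvan in
lemma key_pointwise (v : ℕ × ℕ × ℕ × ℕ) :
    pX1 del v + qX2 del v + qX3 del v = if v.1 = 0 then -(f4 del v) else 0 := by
  obtain ⟨a, b, c, d⟩ := v
  by_cases ha : a = 0
  · subst ha
    rw [if_pos rfl]
    by_cases hc : c = 0
    · subst hc
      simp only [pX1, qX2, qX3, f4]
      rw [if_neg (by omega), if_neg (by omega), kap_one]
      ring
    · simp only [pX1, qX2, qX3, f4]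
      rw [if_neg (by omega), if_pos (by omega), kap_one]
      ring
  · rw [if_neg ha]
    by_cases hc : c = 0
    · subst hc
      simp only [pX1, qX2, qX3, f4]
      rw [if_neg (by omega), if_neg (by omega),
        hvan (a+1) (b+1) (0+1) (d+1) (by omega)]
      ring
    · simp only [pX1, qX2, qX3, f4]
      rw [if_pos ⟨by omega, by omega⟩, if_pos (by omega), kap_succ a (c+1)]
      ring

include hnn hvan hmom in
lemma tsum_D :
    ∑' w : ℕ × ℕ × ℕ, del 1 (w.1 + 1) (w.2.1 + 1) (w.2.2 + 1) =
      ∑' c : ℕ, mar2 del 1 (c + 1) := by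
  have hd4 := sum_d4 hnn hvan hmom
  have hg : Function.Injective (fun u : ℕ × ℕ × ℕ => (u.2.1, u.1, u.2.2)) := by
    intro x y hxy; simp only [Prod.ext_iff] at hxy ⊢; omega
  have hsupp : Function.support
      (fun w : ℕ × ℕ × ℕ => del 1 (w.1 + 1) (w.2.1 + 1) (w.2.2 + 1)) ⊆
      Set.range (fun u : ℕ × ℕ × ℕ => (u.2.1, u.1, u.2.2)) := by
    intro w _
    exact ⟨(w.2.1, w.1, w.2.2), rfl⟩
  rw [← hg.tsum_eq hsupp]
  have hFe : Summable (fun u : ℕ × ℕ × ℕ => del 1 (u.2.1 + 1) (u.1 + 1) (u.2.2 + 1)) := by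
    refine (hd4.comp_injective (i := fun u : ℕ × ℕ × ℕ =>
      ((1:ℕ), u.2.1 + 1, u.1 + 1, u.2.2 + 1)) ?_).congr (fun u => rfl)
    intro x y hxy; simp only [Prod.ext_iff] at hxy ⊢; omega
  have hslice : ∀ c : ℕ, Summable (fun p : ℕ × ℕ => del 1 (p.1 + 1) (c + 1) (p.2 + 1)) := by
    intro c
    refine (hd4.comp_injective (i := fun p : ℕ × ℕ =>
      ((1:ℕ), p.1 + 1, c + 1, p.2 + 1)) ?_).congr (fun p => rfl)
    intro x y hxy; simp only [Prod.ext_iff] at hxy ⊢; omega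
  rw [show (fun u : ℕ × ℕ × ℕ =>
      (fun w : ℕ × ℕ × ℕ => del 1 (w.1 + 1) (w.2.1 + 1) (w.2.2 + 1))
        ((fun u : ℕ × ℕ × ℕ => (u.2.1, u.1, u.2.2)) u)) =
      (fun u : ℕ × ℕ × ℕ => del 1 (u.2.1 + 1) (u.1 + 1) (u.2.2 + 1)) from rfl]
  rw [Summable.tsum_prod' hFe hslice]
  refine tsum_congr (fun c => ?_)
  have hinj : Function.Injective (fun p : ℕ × ℕ => (p.1 + 1, p.2 + 1)) := by
    intro x y hxy; simp only [Prod.ext_iff] at hxy ⊢; omega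
  have hsupp2 : Function.support (fun yy : ℕ × ℕ => del 1 yy.1 (c + 1) yy.2) ⊆
      Set.range (fun p : ℕ × ℕ => (p.1 + 1, p.2 + 1)) := by
    intro yy hyy
    simp only [Function.mem_support] at hyy
    rcases Nat.eq_zero_or_pos yy.1 with h1 | h1
    · exact absurd (hvan 1 yy.1 (c+1) yy.2 (by omega)) hyy
    rcases Nat.eq_zero_or_pos yy.2 with h2 | h2
    · exact absurd (hvan 1 yy.1 (c+1) yy.2 (by omega)) hyy
    obtain ⟨y1, y2⟩ := yy
    simp only [Function.mem_support] at hyy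
    exact ⟨(y1 - 1, y2 - 1), by simp only [Prod.mk.injEq, and_true, true_and]; omega⟩
  have h := hinj.tsum_eq hsupp2 (f := fun yy : ℕ × ℕ => del 1 yy.1 (c + 1) yy.2)
  rw [mar2, ← h]

include hnn hvan hmom in
lemma tsum_pX : Summable (pX del) ∧
    ∑' v : ℕ × ℕ × ℕ × ℕ, pX del v = -∑' c : ℕ, mar2 del 1 (c + 1) := by
  have hd4 := sum_d4 hnn hvan hmom
  have h1 := sum_pX1 hnn hvan hmom
  have h2 := sum_pX2 hnn hvan hmom
  have h3 := sum_pX3 hnn hvan hmom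
  have hq2 := sum_qX2 hnn hvan hmom
  have hq3 := sum_qX3 hnn hvan hmom
  have hsum : Summable (pX del) :=
    ((h1.add h2).add h3).congr (fun v => (pX_split del v).symm)
  refine ⟨hsum, ?_⟩
  have e1 : ∑' v : ℕ × ℕ × ℕ × ℕ, pX del v =
      (∑' v, pX1 del v) + (∑' v, pX2 del v) + (∑' v, pX3 del v) := by
    rw [← Summable.tsum_add h1 h2, ← Summable.tsum_add (h1.add h2) h3]
    exact tsum_congr (pX_split del)
  rw [e1, tsum_pX2_eq (del := del), tsum_pX3_eq (del := del), ← Summable.tsum_add h1 hq2, ← Summable.tsum_add (h1.add hq2) hq3]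
  rw [tsum_congr (fun v => key_pointwise hvan v)]
  have hj : Function.Injective (fun w : ℕ × ℕ × ℕ => ((0:ℕ), w.1, w.2.1, w.2.2)) := by
    intro x y hxy; simp only [Prod.ext_iff] at hxy ⊢; omega
  have hs : Function.support (fun v : ℕ × ℕ × ℕ × ℕ =>
      if v.1 = 0 then -(f4 del v) else 0) ⊆
      Set.range (fun w : ℕ × ℕ × ℕ => ((0:ℕ), w.1, w.2.1, w.2.2)) := by
    intro v hv
    obtain ⟨v1, v2, v3, v4⟩ := v
    simp only [Function.mem_support] at hv
    have hv1 : v1 = 0 := by by_contra hk; rw [if_neg hk] at hv; exact hv rfl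
    exact ⟨(v2, v3, v4), by simp only [Prod.mk.injEq, and_true, true_and]; omega⟩
  rw [← hj.tsum_eq hs]
  have hcong : ∀ w : ℕ × ℕ × ℕ,
      (if (((0:ℕ), w.1, w.2.1, w.2.2) : ℕ × ℕ × ℕ × ℕ).1 = 0 then
        -(f4 del ((0:ℕ), w.1, w.2.1, w.2.2)) else 0) =
      -(del 1 (w.1 + 1) (w.2.1 + 1) (w.2.2 + 1)) := fun w => by simp [f4]
  rw [tsum_congr hcong, tsum_neg, tsum_D hnn hvan hmom]

end tsums

section rest
variable {del : ℕ → ℕ → ℕ → ℕ → ℝ}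
variable (hnn : ∀ x1 y1 x2 y2, 0 ≤ del x1 y1 x2 y2)
variable (hvan : ∀ x1 y1 x2 y2, x1 = 0 ∨ y1 = 0 ∨ x2 = 0 ∨ y2 = 0 ∨ x2 < x1 ∨ y2 < y1 →
      del x1 y1 x2 y2 = 0)
variable (hsym : ∀ x1 y1 x2 y2, del x1 y1 x2 y2 = del y1 x1 y2 x2)
variable (hmom : Summable (fun v : ℕ × ℕ × ℕ × ℕ =>
      (v.2.2.1 : ℝ) * del v.1 v.2.1 v.2.2.1 v.2.2.2))

include hsym in
lemma pY_eq_pX (v : ℕ × ℕ × ℕ × ℕ) :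
    pY del v = pX del (v.2.1, v.1, v.2.2.2, v.2.2.1) := by
  obtain ⟨a, b, c, d⟩ := v
  simp only [pX, pY]
  rw [hsym (a+1) (b+1) (c+1) (d+1), hsym (a+1) (b+2) (c+1) (d+2),
    hsym (a+1) (b+1) (c+1) (d+2)]

include hnn hvan hsym hmom in
lemma tsum_pY : Summable (pY del) ∧
    ∑' v : ℕ × ℕ × ℕ × ℕ, pY del v = -∑' c : ℕ, mar2 del 1 (c + 1) := by
  obtain ⟨hX, hXt⟩ := tsum_pX hnn hvan hmom
  have hswap : Function.Injective
      (fun v : ℕ × ℕ × ℕ × ℕ => ((v.2.1, v.1, v.2.2.2, v.2.2.1) : ℕ × ℕ × ℕ × ℕ)) := by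
    intro x y hxy; simp only [Prod.ext_iff] at hxy ⊢; tauto
  have hsumY : Summable (pY del) :=
    (hX.comp_injective hswap).congr (fun v => (pY_eq_pX hsym v).symm)
  refine ⟨hsumY, ?_⟩
  rw [tsum_congr (pY_eq_pX hsym)]
  rw [← hXt]
  exact Equiv.tsum_eq
    (⟨fun v => (v.2.1, v.1, v.2.2.2, v.2.2.1), fun v => (v.2.1, v.1, v.2.2.2, v.2.2.1),
      fun v => rfl, fun v => rfl⟩ : (ℕ × ℕ × ℕ × ℕ) ≃ (ℕ × ℕ × ℕ × ℕ)) (pX del)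

include hnn hvan hmom in
lemma tsum_pB (lam : ℝ) : Summable (pB lam del) ∧
    ∑' v : ℕ × ℕ × ℕ × ℕ, pB lam del v = 0 := by
  have hd4 := sum_d4 hnn hvan hmom
  have hf := sum_f4 hd4
  have h2 : Summable (fun v : ℕ × ℕ × ℕ × ℕ => del (v.1+1) (v.2.1+1) v.2.2.1 (v.2.2.2+1)) := by
    refine (hd4.comp_injective (i := fun v : ℕ × ℕ × ℕ × ℕ =>
      (v.1+1, v.2.1+1, v.2.2.1, v.2.2.2+1)) ?_).congr (fun v => rfl)
    intro x y hxy; simp only [Prod.ext_iff] at hxy ⊢; omega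
  have h3 : Summable (fun v : ℕ × ℕ × ℕ × ℕ => del (v.1+1) (v.2.1+1) (v.2.2.1+1) v.2.2.2) := by
    refine (hd4.comp_injective (i := fun v : ℕ × ℕ × ℕ × ℕ =>
      (v.1+1, v.2.1+1, v.2.2.1+1, v.2.2.2)) ?_).congr (fun v => rfl)
    intro x y hxy; simp only [Prod.ext_iff] at hxy ⊢; omega
  have hB : Summable (pB lam del) := by
    refine (((hf.mul_left (-(4*lam))).add (h2.mul_left (2*lam))).add
      (h3.mul_left (2*lam))).congr (fun v => ?_)
    obtain ⟨a, b, c, d⟩ := v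
    simp only [pB, f4]
    ring
  refine ⟨hB, ?_⟩
  have e1 : ∑' v : ℕ × ℕ × ℕ × ℕ, pB lam del v =
      (∑' v : ℕ × ℕ × ℕ × ℕ, -(4*lam) * f4 del v) +
      (∑' v : ℕ × ℕ × ℕ × ℕ, 2*lam * del (v.1+1) (v.2.1+1) v.2.2.1 (v.2.2.2+1)) +
      (∑' v : ℕ × ℕ × ℕ × ℕ, 2*lam * del (v.1+1) (v.2.1+1) (v.2.2.1+1) v.2.2.2) := by
    rw [← Summable.tsum_add (hf.mul_left (-(4*lam))) (h2.mul_left (2*lam)),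
      ← Summable.tsum_add ((hf.mul_left (-(4*lam))).add (h2.mul_left (2*lam))) (h3.mul_left (2*lam))]
    refine tsum_congr (fun v => ?_)
    obtain ⟨a, b, c, d⟩ := v
    simp only [pB, f4]
    ring
  have h2t : ∑' v : ℕ × ℕ × ℕ × ℕ, del (v.1+1) (v.2.1+1) v.2.2.1 (v.2.2.2+1) =
      ∑' v : ℕ × ℕ × ℕ × ℕ, f4 del v := by
    have hinj : Function.Injective (fun v : ℕ × ℕ × ℕ × ℕ =>
        ((v.1, v.2.1, v.2.2.1 + 1, v.2.2.2) : ℕ × ℕ × ℕ × ℕ)) := by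
      intro x y hxy; simp only [Prod.ext_iff] at hxy ⊢; omega
    have hsupp : Function.support
        (fun w : ℕ × ℕ × ℕ × ℕ => del (w.1+1) (w.2.1+1) w.2.2.1 (w.2.2.2+1)) ⊆
        Set.range (fun v : ℕ × ℕ × ℕ × ℕ => ((v.1, v.2.1, v.2.2.1 + 1, v.2.2.2) : ℕ × ℕ × ℕ × ℕ)) := by
      intro w hw
      obtain ⟨w1, w2, w3, w4⟩ := w
      simp only [Function.mem_support] at hw
      rcases Nat.eq_zero_or_pos w3 with h | h
      · exact absurd (hvan (w1+1) (w2+1) w3 (w4+1) (by omega)) hw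
      exact ⟨(w1, w2, w3 - 1, w4), by simp only [Prod.mk.injEq, and_true, true_and]; omega⟩
    exact (hinj.tsum_eq hsupp).symm
  have h3t : ∑' v : ℕ × ℕ × ℕ × ℕ, del (v.1+1) (v.2.1+1) (v.2.2.1+1) v.2.2.2 =
      ∑' v : ℕ × ℕ × ℕ × ℕ, f4 del v := by
    have hinj : Function.Injective (fun v : ℕ × ℕ × ℕ × ℕ =>
        ((v.1, v.2.1, v.2.2.1, v.2.2.2 + 1) : ℕ × ℕ × ℕ × ℕ)) := by
      intro x y hxy; simp only [Prod.ext_iff] at hxy ⊢; omega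
    have hsupp : Function.support
        (fun w : ℕ × ℕ × ℕ × ℕ => del (w.1+1) (w.2.1+1) (w.2.2.1+1) w.2.2.2) ⊆
        Set.range (fun v : ℕ × ℕ × ℕ × ℕ => ((v.1, v.2.1, v.2.2.1, v.2.2.2 + 1) : ℕ × ℕ × ℕ × ℕ)) := by
      intro w hw
      obtain ⟨w1, w2, w3, w4⟩ := w
      simp only [Function.mem_support] at hw
      rcases Nat.eq_zero_or_pos w4 with h | h
      · exact absurd (hvan (w1+1) (w2+1) (w3+1) w4 (by omega)) hw
      exact ⟨(w1, w2, w3, w4 - 1), by simp only [Prod.mk.injEq, and_true, true_and]; omega⟩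
    exact (hinj.tsum_eq hsupp).symm
  rw [e1, tsum_mul_left, tsum_mul_left, tsum_mul_left, h2t, h3t]
  ring

set_option maxHeartbeats 1000000 in
include hnn hvan hmom in
lemma tsum_pA (lam : ℝ) : Summable (pA lam del) ∧
    ∑' v : ℕ × ℕ × ℕ × ℕ, pA lam del v = lam := by
  have hd4 := sum_d4 hnn hvan hmom
  have hq := sum_q hnn hd4
  have habs : Summable (fun x : ℕ => |qPos del x|) := summable_abs_iff.mpr hq
  have hprod : Summable (fun p : ℕ × ℕ => |qPos del p.1| * |qPos del p.2|) :=
    habs.mul_of_nonneg habs (fun x => abs_nonneg _) (fun x => abs_nonneg _)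
  have hqq : Summable (fun p : ℕ × ℕ => qPos del p.1 * qPos del p.2) :=
    Summable.of_abs (hprod.congr (fun p => (abs_mul _ _).symm))
  have hqq2 : Summable (fun p : ℕ × ℕ => lam * qPos del p.1 * qPos del p.2) :=
    (hqq.mul_left lam).congr (fun p => by ring)
  have hj : Function.Injective (fun p : ℕ × ℕ => ((p.1, p.2, p.1, p.2) : ℕ × ℕ × ℕ × ℕ)) := by
    intro x y hxy; simp only [Prod.ext_iff] at hxy ⊢; tauto
  have hsupp : Function.support (pA lam del) ⊆
      Set.range (fun p : ℕ × ℕ => ((p.1, p.2, p.1, p.2) : ℕ × ℕ × ℕ × ℕ)) := by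
    intro v hv
    obtain ⟨a, b, c, d⟩ := v
    simp only [Function.mem_support, pA] at hv
    have hcond : a = c ∧ b = d := by
      by_contra hk; rw [if_neg hk, mul_zero] at hv; exact hv rfl
    exact ⟨(a, b), by simp only [Prod.mk.injEq, and_true, true_and]; tauto⟩
  have hcomp : ∀ p : ℕ × ℕ, pA lam del ((p.1, p.2, p.1, p.2) : ℕ × ℕ × ℕ × ℕ) =
      lam * qPos del p.1 * qPos del p.2 := by
    intro p
    simp [pA]
  have hsumA : Summable (pA lam del) := by
    refine (hj.summable_iff (fun x hx => ?_)).mp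
      (hqq2.congr (fun p => (hcomp p).symm))
    by_contra h0
    exact hx (hsupp h0)
  refine ⟨hsumA, ?_⟩
  have h1 : ∑' v : ℕ × ℕ × ℕ × ℕ, pA lam del v =
      ∑' p : ℕ × ℕ, lam * qPos del p.1 * qPos del p.2 := by
    rw [← hj.tsum_eq hsupp]
    exact tsum_congr hcomp
  rw [h1, Summable.tsum_prod' hqq2 (fun b => (hq.mul_left (lam * qPos del b)))]
  have h2 : ∀ b : ℕ, ∑' c : ℕ, lam * qPos del b * qPos del c = lam * qPos del b := by
    intro b
    rw [tsum_mul_left, tsum_q hnn hd4, mul_one]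
  rw [tsum_congr h2, tsum_mul_left, tsum_q hnn hd4, mul_one]

end rest

set_option maxHeartbeats 1000000 in
theorem fcfs_pair_drift_total_sum
    (lam : ℝ) (hlam0 : 0 < lam) (hlam1 : lam < 1)
    (del : ℕ → ℕ → ℕ → ℕ → ℝ) (hdel : AdmissibleQuad del) :
    Summable (fun v : ℕ × ℕ × ℕ × ℕ =>
      |GFCFS lam del (v.1 + 1) (v.2.1 + 1) (v.2.2.1 + 1) (v.2.2.2 + 1)|) ∧
    (∑' v : ℕ × ℕ × ℕ × ℕ,
        GFCFS lam del (v.1 + 1) (v.2.1 + 1) (v.2.2.1 + 1) (v.2.2.2 + 1)) =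
      lam - 2 * ∑' x2 : ℕ, mar2 del 1 (x2 + 1) ∧
    ((∀ x1 y1 x2 y2 : ℕ, 1 ≤ x1 → 1 ≤ y1 → 1 ≤ x2 → 1 ≤ y2 →
        GFCFS lam del x1 y1 x2 y2 = 0) →
      qPos del 0 = 1 - lam) := by
  obtain ⟨hnn, hvan, hsym, hmom, hpos⟩ := hdel
  have hd4 := sum_d4 hnn hvan hmom
  obtain ⟨hA, hAt⟩ := tsum_pA hnn hvan hmom lam
  obtain ⟨hB, hBt⟩ := tsum_pB hnn hvan hmom lam
  obtain ⟨hX, hXt⟩ := tsum_pX hnn hvan hmom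
  obtain ⟨hY, hYt⟩ := tsum_pY hnn hvan hsym hmom
  have hsumG : Summable (fun v : ℕ × ℕ × ℕ × ℕ =>
      GFCFS lam del (v.1 + 1) (v.2.1 + 1) (v.2.2.1 + 1) (v.2.2.2 + 1)) :=
    (((hA.add hB).add hX).add hY).congr (fun v => (G_decomp lam del v).symm)
  have htG : (∑' v : ℕ × ℕ × ℕ × ℕ,
      GFCFS lam del (v.1 + 1) (v.2.1 + 1) (v.2.2.1 + 1) (v.2.2.2 + 1)) =
      lam - 2 * ∑' x2 : ℕ, mar2 del 1 (x2 + 1) := by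
    rw [tsum_congr (G_decomp lam del), Summable.tsum_add ((hA.add hB).add hX) hY,
      Summable.tsum_add (hA.add hB) hX, Summable.tsum_add hA hB, hAt, hBt, hXt, hYt]
    ring
  refine ⟨summable_abs_iff.mpr hsumG, htG, ?_⟩
  intro hG0
  have h0 : (∑' v : ℕ × ℕ × ℕ × ℕ,
      GFCFS lam del (v.1 + 1) (v.2.1 + 1) (v.2.2.1 + 1) (v.2.2.2 + 1)) = 0 := by
    rw [tsum_congr (fun v : ℕ × ℕ × ℕ × ℕ =>
      hG0 (v.1 + 1) (v.2.1 + 1) (v.2.2.1 + 1) (v.2.2.2 + 1)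
        (by omega) (by omega) (by omega) (by omega))]
    exact tsum_zero
  have hlamD : lam = 2 * ∑' x2 : ℕ, mar2 del 1 (x2 + 1) := by
    rw [h0] at htG; linarith
  have hq0 : qPos del 0 = 1 - ∑' z : ℕ, 2 * mar2 del 1 (z + 1) := by simp [qPos]
  rw [hq0, tsum_mul_left, ← hlamD]
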